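/- If 𝒜 is a natural Banach A-valued function algebra on X, then the map 𝒥 : X × Δ(A) → Δ(𝒜), (x,φ) ↦ (f ↦ φ(f(x))), is a homeomorphism; i.e., Δ(𝒜) is homeomorphic to X × Δ(A). -/

import Mathlib

open WeakDual

variable {X : Type*} [TopologicalSpace X] [CompactSpace X] [T2Space X] [Nonempty X]
variable {A : Type*} [NormedCommRing A] [NormedAlgebra ℂ A] [CompleteSpace A] [Nontrivial A]
variable {B : Type*} [NormedCommRing B] [NormedAlgebra ℂ B] [CompleteSpace B]

/-- If 𝒜 is a natural Banach A-valued function algebra on X, then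
Δ(𝒜) ≃ X × Δ(A) via (x,φ) ↦ (f ↦ φ(f(x))). -/
theorem stmt9
(ι : B →ₐ[ℂ] C(X, A)) (hinj : Function.Injective ι)
    (κ : A →ₐ[ℂ] B) (hκ : ∀ a : A, ι (κ a) = ContinuousMap.const X a)
    (hκnorm : ∃ c₁ > (0:ℝ), ∃ c₂ > (0:ℝ), ∀ a : A, c₁ * ‖a‖ ≤ ‖κ a‖ ∧ ‖κ a‖ ≤ c₂ * ‖a‖)
    (hdom : ∀ f : B, ‖ι f‖ ≤ ‖f‖)
    (hsep : ∀ x y : X, x ≠ y → ∀ M : Ideal A, M.IsMaximal → ∃ f : B, ι f x - ι f y ∉ M)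
(hss : Ideal.jacobson (⊥ : Ideal A) = ⊥)
    (hnat : ∀ ℳ : Ideal B, ℳ.IsMaximal → ∃ (x₀ : X) (M : Ideal A), M.IsMaximal ∧
      ∀ f : B, f ∈ ℳ ↔ ι f x₀ ∈ M) :
    ∃ J : X × characterSpace ℂ A ≃ₜ characterSpace ℂ B,
      ∀ (x : X) (φ : characterSpace ℂ A) (f : B), J (x, φ) f = φ (ι f x) := by
  classical
  -- the forward map
  let T : X × characterSpace ℂ A → characterSpace ℂ B := fun p =>
    CharacterSpace.equivAlgHom.symm <|
      ((CharacterSpace.equivAlgHom p.2 : A →ₐ[ℂ] ℂ).comp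
        ((ContinuousMap.evalAlgHom ℂ A p.1).comp ι))
  have hT : ∀ (x : X) (φ : characterSpace ℂ A) (f : B), (T (x, φ)) f = φ (ι f x) :=
    fun x φ f => rfl
  -- injectivity
  have Tinj : Function.Injective T := by
    rintro ⟨x, φ⟩ ⟨y, ψ⟩ h
    have hφψ : φ = ψ := by
      apply Subtype.ext
      apply ContinuousLinearMap.ext
      intro a
      have h1 : (T (x, φ)) (κ a) = (T (y, ψ)) (κ a) := by rw [h]
      have h2 : φ (ι (κ a) x) = ψ (ι (κ a) y) := h1
      have h3 := h2
      simp [hκ a] at h3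
      exact h3
    subst hφψ
    have hxy : x = y := by
      by_contra hne
      obtain ⟨f, hf⟩ := hsep x y hne (RingHom.ker φ) inferInstance
      apply hf
      have h1 : (T (x, φ)) f = (T (y, φ)) f := by rw [h]
      have h2 : φ (ι f x) = φ (ι f y) := h1
      simpa [RingHom.mem_ker, map_sub, sub_eq_zero] using h2
    subst hxy; rfl
  -- surjectivity
  have Tsurj : Function.Surjective T := by
    intro ψ
    obtain ⟨x₀, M, hM, hiff⟩ := hnat (RingHom.ker ψ) inferInstance
    haveI := hM
    refine ⟨(x₀, M.toCharacterSpace), ?_⟩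
    have hMker : ∀ a : A, a ∈ M ↔ M.toCharacterSpace a = 0 := by
      have hle : M ≤ RingHom.ker (M.toCharacterSpace) := fun a ha =>
        Ideal.toCharacterSpace_apply_eq_zero_of_mem M ha
      have heq : M = RingHom.ker (M.toCharacterSpace) :=
        (hM.eq_of_le (Ideal.IsMaximal.ne_top inferInstance) hle)
      intro a
      constructor
      · exact fun h => hle h
      · intro h
        have h' : a ∈ RingHom.ker (M.toCharacterSpace) := h
        rwa [← heq] at h'
    -- both characters have the same kernel
    have hker : ∀ f : B, (T (x₀, M.toCharacterSpace)) f = 0 ↔ ψ f = 0 := by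
      intro f
      rw [hT, ← hMker, ← hiff]
      exact Iff.rfl
    apply Subtype.ext
    apply ContinuousLinearMap.ext
    intro f
    have hmem : ψ (f - algebraMap ℂ B (ψ f)) = 0 := by
      simp [map_sub, AlgHomClass.commutes]
    have h0 : (T (x₀, M.toCharacterSpace)) (f - algebraMap ℂ B (ψ f)) = 0 :=
      (hker _).mpr hmem
    have : (T (x₀, M.toCharacterSpace)) f - ψ f = 0 := by
      simpa [map_sub, AlgHomClass.commutes] using h0
    have := sub_eq_zero.mp this
    exact this
  -- continuity
  have Tcont : Continuous T := by
    apply Continuous.subtype_mk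
    apply WeakDual.continuous_of_continuous_eval
    intro f
    rw [continuous_iff_continuousAt]
    rintro ⟨x₀, φ₀⟩
    have heq : (fun p : X × characterSpace ℂ A => p.2 (ι f p.1))
        = fun p => p.2 (ι f p.1 - ι f x₀) + p.2 (ι f x₀) := by
      funext p
      rw [map_sub]; ring
    have h2 : Continuous fun p : X × characterSpace ℂ A => p.2 (ι f x₀) := by
      exact (WeakDual.eval_continuous (ι f x₀)).comp
        (continuous_subtype_val.comp continuous_snd)
    have h1 : Filter.Tendsto (fun p : X × characterSpace ℂ A => p.2 (ι f p.1 - ι f x₀))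
        (nhds (x₀, φ₀)) (nhds 0) := by
      apply squeeze_zero_norm
        (a := fun p : X × characterSpace ℂ A => ‖(1 : A)‖ * ‖ι f p.1 - ι f x₀‖)
      · intro p
        calc ‖p.2 (ι f p.1 - ι f x₀)‖
            ≤ ‖toStrongDual (p.2 : WeakDual ℂ A)‖ * ‖ι f p.1 - ι f x₀‖ :=
              ContinuousLinearMap.le_opNorm _ _
          _ ≤ ‖(1 : A)‖ * ‖ι f p.1 - ι f x₀‖ :=
              mul_le_mul_of_nonneg_right (CharacterSpace.norm_le_norm_one p.2)
                (norm_nonneg _)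
      · have hc : Continuous fun p : X × characterSpace ℂ A =>
            ‖(1 : A)‖ * ‖ι f p.1 - ι f x₀‖ :=
          (continuous_const.mul
            (((((ι f).continuous.comp continuous_fst).sub continuous_const).norm)))
        have := hc.continuousAt (x := (x₀, φ₀))
        simpa using this.tendsto
    show ContinuousAt (fun p : X × characterSpace ℂ A => p.2 (ι f p.1)) (x₀, φ₀)
    rw [heq]
    have := h1.add (h2.continuousAt (x := (x₀, φ₀)))
    unfold ContinuousAt
    simpa using this
  let E : X × characterSpace ℂ A ≃ characterSpace ℂ B := Equiv.ofBijective T ⟨Tinj, Tsurj⟩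
  have hE : Continuous (E : X × characterSpace ℂ A → characterSpace ℂ B) := Tcont
  exact ⟨Continuous.homeoOfEquivCompactToT2 hE, fun x φ f => rfl⟩
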